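/- Let (v₁,v₂) ∈ ℤ² satisfy −c < v₁ ≤ a and −d < v₂ ≤ b. Then the monomial x₁^{v₁}x₂^{v₂} lies in the F-subspace span_F{ x₁^{w₁}x₂^{w₂} : (w₁,w₂) ∈ B } + D₁(R) + D₂(R) of R. -/

import Mathlib

/-- The Laurent polynomial ring `F[x₁^{±1}, x₂^{±1}]` as the monoid algebra of `ℤ²` over `F`. -/
noncomputable abbrev LaurentR (F : Type*) [Field F] := AddMonoidAlgebra F (ℤ × ℤ)

/-- The operator `D₁(h) = x₁ ∂h/∂x₁ + (a·x₁^a − c·λ·x₁^{−c}x₂^{−d})·h`. -/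
noncomputable def D1 {F : Type*} [Field F] (a c d : ℕ) (lam : F)
    (h : LaurentR F) : LaurentR F :=
  Finsupp.sum h.coeff (fun v r => AddMonoidAlgebra.single v ((v.1 : F) * r)) +
    (AddMonoidAlgebra.single ((a : ℤ), (0 : ℤ)) (a : F)
      - AddMonoidAlgebra.single (-(c : ℤ), -(d : ℤ)) ((c : F) * lam)) * h

/-- The operator `D₂(h) = x₂ ∂h/∂x₂ + (b·x₂^b − d·λ·x₁^{−c}x₂^{−d})·h`. -/
noncomputable def D2 {F : Type*} [Field F] (b c d : ℕ) (lam : F)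
    (h : LaurentR F) : LaurentR F :=
  Finsupp.sum h.coeff (fun v r => AddMonoidAlgebra.single v ((v.2 : F) * r)) +
    (AddMonoidAlgebra.single ((0 : ℤ), (b : ℤ)) (b : F)
      - AddMonoidAlgebra.single (-(c : ℤ), -(d : ℤ)) ((d : F) * lam)) * h


/-- The set `B` of exponent vectors from (1.1) of the paper. -/
def memB (a b c d : ℕ) (v : ℤ × ℤ) : Prop :=
  if 1 < c ∧ 1 < d then
    -(c : ℤ) < v.1 ∧ v.1 ≤ (a : ℤ) ∧ -(d : ℤ) < v.2 ∧ v.2 ≤ (b : ℤ) ∧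
      ((d : ℤ) - 1) * (v.1 - (a : ℤ)) ≤ ((c : ℤ) - 1) * v.2 ∧
      ((c : ℤ) - 1) * v.2 < ((d : ℤ) - 1) * v.1 + ((c : ℤ) - 1) * (b : ℤ)
  else if c = 1 ∧ 1 < d then
    0 ≤ v.1 ∧ v.1 ≤ (a : ℤ) ∧ -(d : ℤ) < v.2 ∧ v.2 ≤ (b : ℤ) ∧
      ¬ (v.1 = (a : ℤ) ∧ 1 - (d : ℤ) ≤ v.2 ∧ v.2 ≤ 0)
  else if 1 < c ∧ d = 1 then
    -(c : ℤ) < v.1 ∧ v.1 ≤ (a : ℤ) ∧ 0 ≤ v.2 ∧ v.2 ≤ (b : ℤ) ∧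
      ¬ (v.2 = (b : ℤ) ∧ 1 - (c : ℤ) ≤ v.1 ∧ v.1 ≤ 0)
  else
    0 ≤ v.1 ∧ v.1 ≤ (a : ℤ) ∧ 0 ≤ v.2 ∧ v.2 ≤ (b : ℤ) ∧ v ≠ ((0 : ℤ), (b : ℤ))

namespace Stmt3Aux

variable {F : Type*} [Field F]

lemma D1_add (a c d : ℕ) (lam : F) (h g : LaurentR F) :
    D1 a c d lam (h + g) = D1 a c d lam h + D1 a c d lam g := by
  unfold D1
  rw [AddMonoidAlgebra.coeff_add, Finsupp.sum_add_index' (fun w => by simp)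
      (fun w r s => by rw [mul_add, AddMonoidAlgebra.single_add]), mul_add]
  abel

lemma D1_smul (a c d : ℕ) (lam : F) (k : F) (h : LaurentR F) :
    D1 a c d lam (k • h) = k • D1 a c d lam h := by
  unfold D1
  rw [AddMonoidAlgebra.coeff_smul, Finsupp.sum_smul_index' (fun w => by simp), smul_add, Finsupp.smul_sum, mul_smul_comm]
  simp only [smul_eq_mul, AddMonoidAlgebra.smul_single', mul_left_comm]

lemma D2_add (b c d : ℕ) (lam : F) (h g : LaurentR F) :
    D2 b c d lam (h + g) = D2 b c d lam h + D2 b c d lam g := by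
  unfold D2
  rw [AddMonoidAlgebra.coeff_add, Finsupp.sum_add_index' (fun w => by simp)
      (fun w r s => by rw [mul_add, AddMonoidAlgebra.single_add]), mul_add]
  abel

lemma D2_smul (b c d : ℕ) (lam : F) (k : F) (h : LaurentR F) :
    D2 b c d lam (k • h) = k • D2 b c d lam h := by
  unfold D2
  rw [AddMonoidAlgebra.coeff_smul, Finsupp.sum_smul_index' (fun w => by simp), smul_add, Finsupp.smul_sum, mul_smul_comm]
  simp only [smul_eq_mul, AddMonoidAlgebra.smul_single', mul_left_comm]

noncomputable def L1 (a c d : ℕ) (lam : F) : LaurentR F →ₗ[F] LaurentR F where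
  toFun := D1 a c d lam
  map_add' := D1_add a c d lam
  map_smul' := D1_smul a c d lam

noncomputable def L2 (b c d : ℕ) (lam : F) : LaurentR F →ₗ[F] LaurentR F where
  toFun := D2 b c d lam
  map_add' := D2_add b c d lam
  map_smul' := D2_smul b c d lam

lemma D1_single (a c d : ℕ) (lam : F) (u : ℤ × ℤ) :
    D1 a c d lam (AddMonoidAlgebra.single u 1)
      = AddMonoidAlgebra.single u (u.1 : F)
        + AddMonoidAlgebra.single (((a : ℤ), (0 : ℤ)) + u) (a : F)
        - AddMonoidAlgebra.single ((-(c : ℤ), -(d : ℤ)) + u) ((c : F) * lam) := by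
  unfold D1
  rw [AddMonoidAlgebra.coeff_single, Finsupp.sum_single_index (by simp), sub_mul, AddMonoidAlgebra.single_mul_single,
    AddMonoidAlgebra.single_mul_single]
  simp only [mul_one]
  abel

lemma D2_single (b c d : ℕ) (lam : F) (u : ℤ × ℤ) :
    D2 b c d lam (AddMonoidAlgebra.single u 1)
      = AddMonoidAlgebra.single u (u.2 : F)
        + AddMonoidAlgebra.single (((0 : ℤ), (b : ℤ)) + u) (b : F)
        - AddMonoidAlgebra.single ((-(c : ℤ), -(d : ℤ)) + u) ((d : F) * lam) := by
  unfold D2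
  rw [AddMonoidAlgebra.coeff_single, Finsupp.sum_single_index (by simp), sub_mul, AddMonoidAlgebra.single_mul_single,
    AddMonoidAlgebra.single_mul_single]
  simp only [mul_one]
  abel

lemma key (a b c d : ℕ) (lam : F) (u : ℤ × ℤ) :
    AddMonoidAlgebra.single (((0 : ℤ), (b : ℤ)) + u) ((c : F) * b)
      = AddMonoidAlgebra.single u ((d : F) * u.1)
        - AddMonoidAlgebra.single u ((c : F) * u.2)
        + AddMonoidAlgebra.single (((a : ℤ), (0 : ℤ)) + u) ((d : F) * a)
        - ((d : F) • D1 a c d lam (AddMonoidAlgebra.single u 1)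
            - (c : F) • D2 b c d lam (AddMonoidAlgebra.single u 1)) := by
  rw [D1_single, D2_single, smul_sub, smul_add, smul_sub, smul_add]
  simp only [AddMonoidAlgebra.smul_single']
  rw [show (d : F) * ((c : F) * lam) = (c : F) * ((d : F) * lam) by ring]
  abel

lemma key' (a b c d : ℕ) (lam : F) (u : ℤ × ℤ) :
    AddMonoidAlgebra.single (((a : ℤ), (0 : ℤ)) + u) ((d : F) * a)
      = AddMonoidAlgebra.single u ((c : F) * u.2)
        - AddMonoidAlgebra.single u ((d : F) * u.1)
        + AddMonoidAlgebra.single (((0 : ℤ), (b : ℤ)) + u) ((c : F) * b)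
        + ((d : F) • D1 a c d lam (AddMonoidAlgebra.single u 1)
            - (c : F) • D2 b c d lam (AddMonoidAlgebra.single u 1)) := by
  rw [D1_single, D2_single, smul_sub, smul_add, smul_sub, smul_add]
  simp only [AddMonoidAlgebra.smul_single']
  rw [show (d : F) * ((c : F) * lam) = (c : F) * ((d : F) * lam) by ring]
  abel

/-- The submodule spanned by the `B`-monomials together with the images of `D1` and `D2`. -/
noncomputable def Mm (a b c d : ℕ) (lam : F) : Submodule F (LaurentR F) :=
  Submodule.span F
      {x : LaurentR F | ∃ w : ℤ × ℤ, memB a b c d w ∧ x = AddMonoidAlgebra.single w (1 : F)}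
    ⊔ LinearMap.range (L1 a c d lam) ⊔ LinearMap.range (L2 b c d lam)

lemma mem_of_memB {a b c d : ℕ} {lam : F} {w : ℤ × ℤ} (h : memB a b c d w) :
    AddMonoidAlgebra.single w (1 : F) ∈ Mm a b c d lam := by
  apply Submodule.mem_sup_left
  apply Submodule.mem_sup_left
  exact Submodule.subset_span ⟨w, h, rfl⟩

lemma D1_mem {a b c d : ℕ} {lam : F} (h : LaurentR F) :
    D1 a c d lam h ∈ Mm a b c d lam :=
  Submodule.mem_sup_left (Submodule.mem_sup_right ⟨h, rfl⟩)

lemma D2_mem {a b c d : ℕ} {lam : F} (h : LaurentR F) :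
    D2 b c d lam h ∈ Mm a b c d lam :=
  Submodule.mem_sup_right ⟨h, rfl⟩

lemma X_mem {a b c d : ℕ} {lam : F} (u : ℤ × ℤ) :
    (d : F) • D1 a c d lam (AddMonoidAlgebra.single u 1)
      - (c : F) • D2 b c d lam (AddMonoidAlgebra.single u 1) ∈ Mm a b c d lam :=
  sub_mem (Submodule.smul_mem _ _ (D1_mem _)) (Submodule.smul_mem _ _ (D2_mem _))

lemma smul_single_mem {a b c d : ℕ} {lam : F} {w : ℤ × ℤ} (α : F)
    (h : AddMonoidAlgebra.single w (1 : F) ∈ Mm a b c d lam) :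
    AddMonoidAlgebra.single w α ∈ Mm a b c d lam := by
  have := Submodule.smul_mem (Mm a b c d lam) α h
  rwa [AddMonoidAlgebra.smul_single', mul_one] at this

lemma single_mem_of {a b c d : ℕ} {lam : F} {w : ℤ × ℤ} {α : F} (hα : α ≠ 0)
    (h : AddMonoidAlgebra.single w α ∈ Mm a b c d lam) :
    AddMonoidAlgebra.single w (1 : F) ∈ Mm a b c d lam := by
  have := Submodule.smul_mem (Mm a b c d lam) α⁻¹ h
  rwa [AddMonoidAlgebra.smul_single', inv_mul_cancel₀ hα] at this

lemma stepUp {a b c d : ℕ} {lam : F} (hcb : (c : F) * b ≠ 0) (u : ℤ × ℤ)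
    (h1 : AddMonoidAlgebra.single u (1 : F) ∈ Mm a b c d lam)
    (h2 : AddMonoidAlgebra.single (((a : ℤ), (0 : ℤ)) + u) (1 : F) ∈ Mm a b c d lam) :
    AddMonoidAlgebra.single (((0 : ℤ), (b : ℤ)) + u) (1 : F) ∈ Mm a b c d lam := by
  refine single_mem_of hcb ?_
  rw [key a b c d lam u]
  exact sub_mem (add_mem (sub_mem (smul_single_mem _ h1) (smul_single_mem _ h1))
    (smul_single_mem _ h2)) (X_mem u)

lemma stepDown {a b c d : ℕ} {lam : F} (hda : (d : F) * a ≠ 0) (u : ℤ × ℤ)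
    (h1 : AddMonoidAlgebra.single u (1 : F) ∈ Mm a b c d lam)
    (h2 : AddMonoidAlgebra.single (((0 : ℤ), (b : ℤ)) + u) (1 : F) ∈ Mm a b c d lam) :
    AddMonoidAlgebra.single (((a : ℤ), (0 : ℤ)) + u) (1 : F) ∈ Mm a b c d lam := by
  refine single_mem_of hda ?_
  rw [key' a b c d lam u]
  exact add_mem (add_mem (sub_mem (smul_single_mem _ h1) (smul_single_mem _ h1))
    (smul_single_mem _ h2)) (X_mem u)

section Main

variable {a b c d : ℕ} {lam : F}

/-- Reduction from above the strip (case `1 < c`, `1 < d`). -/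
lemma lemA (hc : 1 < c) (hd : 1 < d) (ha : 0 < a) (hb : 0 < b)
    (hcb : (c : F) * b ≠ 0) (hda : (d : F) * a ≠ 0) :
    ∀ n : ℕ, ∀ v : ℤ × ℤ, -(c : ℤ) < v.1 → v.1 ≤ (a : ℤ) → -(d : ℤ) < v.2 → v.2 ≤ (b : ℤ) →
      -(((d : ℤ) - 1) * a) ≤ ((c : ℤ) - 1) * v.2 - ((d : ℤ) - 1) * v.1 →
      ((c : ℤ) - 1) * v.2 - ((d : ℤ) - 1) * v.1 < ((c : ℤ) - 1) * b + n →
      AddMonoidAlgebra.single v (1 : F) ∈ Mm a b c d lam := by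
  have hCB : (1 : ℤ) ≤ ((c : ℤ) - 1) * b := by
    have := mul_le_mul (show (1 : ℤ) ≤ (c : ℤ) - 1 by omega)
      (show (1 : ℤ) ≤ (b : ℤ) by omega) (by omega) (by omega)
    linarith
  have hDA : (1 : ℤ) ≤ ((d : ℤ) - 1) * a := by
    have := mul_le_mul (show (1 : ℤ) ≤ (d : ℤ) - 1 by omega)
      (show (1 : ℤ) ≤ (a : ℤ) by omega) (by omega) (by omega)
    linarith
  intro n
  induction n with
  | zero =>
    intro v hv1 hv1' hv2 hv2' hlo hhi
    push_cast at hhi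
    apply mem_of_memB
    rw [memB, if_pos ⟨hc, hd⟩]
    exact ⟨hv1, hv1', hv2, hv2', by linarith, by linarith⟩
  | succ n ih =>
    intro v hv1 hv1' hv2 hv2' hlo hhi
    push_cast at hhi
    by_cases hup : ((c : ℤ) - 1) * v.2 - ((d : ℤ) - 1) * v.1 < ((c : ℤ) - 1) * b
    · apply mem_of_memB
      rw [memB, if_pos ⟨hc, hd⟩]
      exact ⟨hv1, hv1', hv2, hv2', by linarith, by linarith⟩
    · push_neg at hup
      -- above the strip: `s ≥ (c-1)b`
      have h3 : 1 - (d : ℤ) ≤ v.2 - b := by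
        have h1 : ((d : ℤ) - 1) * (1 - (c : ℤ)) ≤ ((d : ℤ) - 1) * v.1 :=
          mul_le_mul_of_nonneg_left (by omega) (by omega)
        have h2 : ((c : ℤ) - 1) * (1 - (d : ℤ)) ≤ ((c : ℤ) - 1) * (v.2 - b) := by nlinarith
        exact le_of_mul_le_mul_left h2 (by omega)
      have hv10 : v.1 ≤ 0 := by
        have h4 : ((c : ℤ) - 1) * (v.2 - b) ≤ 0 :=
          mul_nonpos_of_nonneg_of_nonpos (by omega) (by omega)
        have h5 : ((d : ℤ) - 1) * v.1 ≤ ((d : ℤ) - 1) * 0 := by nlinarith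
        exact le_of_mul_le_mul_left h5 (by omega)
      have hv : v = ((0 : ℤ), (b : ℤ)) + (v.1, v.2 - (b : ℤ)) := by
        rw [Prod.mk_add_mk]
        exact Prod.ext (by omega) (by omega)
      rw [hv]
      apply stepUp hcb
      · exact ih (v.1, v.2 - (b : ℤ)) hv1 hv1' (by simp; omega) (by simp; omega)
          (by simp; nlinarith) (by simp; nlinarith)
      · rw [Prod.mk_add_mk, zero_add]
        exact ih ((a : ℤ) + v.1, v.2 - (b : ℤ)) (by simp; omega) (by simp; omega)
          (by simp; omega) (by simp; omega) (by simp; nlinarith) (by simp; nlinarith)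

/-- Reduction from below the strip (case `1 < c`, `1 < d`). -/
lemma lemB (hc : 1 < c) (hd : 1 < d) (ha : 0 < a) (hb : 0 < b)
    (hcb : (c : F) * b ≠ 0) (hda : (d : F) * a ≠ 0) :
    ∀ n : ℕ, ∀ v : ℤ × ℤ, -(c : ℤ) < v.1 → v.1 ≤ (a : ℤ) → -(d : ℤ) < v.2 → v.2 ≤ (b : ℤ) →
      ((c : ℤ) - 1) * v.2 - ((d : ℤ) - 1) * v.1 < ((c : ℤ) - 1) * b →
      -(((d : ℤ) - 1) * a) - n ≤ ((c : ℤ) - 1) * v.2 - ((d : ℤ) - 1) * v.1 →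
      AddMonoidAlgebra.single v (1 : F) ∈ Mm a b c d lam := by
  have hCB : (1 : ℤ) ≤ ((c : ℤ) - 1) * b := by
    have := mul_le_mul (show (1 : ℤ) ≤ (c : ℤ) - 1 by omega)
      (show (1 : ℤ) ≤ (b : ℤ) by omega) (by omega) (by omega)
    linarith
  have hDA : (1 : ℤ) ≤ ((d : ℤ) - 1) * a := by
    have := mul_le_mul (show (1 : ℤ) ≤ (d : ℤ) - 1 by omega)
      (show (1 : ℤ) ≤ (a : ℤ) by omega) (by omega) (by omega)
    linarith
  intro n
  induction n with
  | zero =>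
    intro v hv1 hv1' hv2 hv2' hhi hlo
    push_cast at hlo
    apply mem_of_memB
    rw [memB, if_pos ⟨hc, hd⟩]
    exact ⟨hv1, hv1', hv2, hv2', by linarith, by linarith⟩
  | succ n ih =>
    intro v hv1 hv1' hv2 hv2' hhi hlo
    push_cast at hlo
    by_cases hdn : -(((d : ℤ) - 1) * a) ≤ ((c : ℤ) - 1) * v.2 - ((d : ℤ) - 1) * v.1
    · apply mem_of_memB
      rw [memB, if_pos ⟨hc, hd⟩]
      exact ⟨hv1, hv1', hv2, hv2', by linarith, by linarith⟩
    · push_neg at hdn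
      -- below the strip: `s < -(d-1)a`
      have h3 : 1 - (c : ℤ) < v.1 - a := by
        have h1 : ((c : ℤ) - 1) * (1 - (d : ℤ)) ≤ ((c : ℤ) - 1) * v.2 :=
          mul_le_mul_of_nonneg_left (by omega) (by omega)
        have h2 : ((d : ℤ) - 1) * (1 - (c : ℤ)) < ((d : ℤ) - 1) * (v.1 - a) := by nlinarith
        exact lt_of_mul_lt_mul_left h2 (by omega)
      have hv20 : v.2 < 0 := by
        have h4 : ((d : ℤ) - 1) * (v.1 - a) ≤ 0 :=
          mul_nonpos_of_nonneg_of_nonpos (by omega) (by omega)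
        have h5 : ((c : ℤ) - 1) * v.2 < ((c : ℤ) - 1) * 0 := by nlinarith
        exact lt_of_mul_lt_mul_left h5 (by omega)
      have hv : v = ((a : ℤ), (0 : ℤ)) + (v.1 - (a : ℤ), v.2) := by
        rw [Prod.mk_add_mk]
        exact Prod.ext (by omega) (by omega)
      rw [hv]
      apply stepDown hda
      · exact ih (v.1 - (a : ℤ), v.2) (by simp; omega) (by simp; omega) hv2 hv2'
          (by simp; nlinarith) (by simp; nlinarith)
      · rw [Prod.mk_add_mk, zero_add]
        exact ih (v.1 - (a : ℤ), (b : ℤ) + v.2) (by simp; omega) (by simp; omega)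
          (by simp; omega) (by simp; omega) (by simp; nlinarith) (by simp; nlinarith)

end Main

end Stmt3Aux

theorem stmt3 {F : Type*} [Field F] (p a b c d : ℕ)
    (ha : 0 < a) (hb : 0 < b) (hc : 0 < c) (hd : 0 < d)
    (hab : Nat.gcd a b = 1) (hac : Nat.gcd a c = 1)
    (hbc : Nat.gcd b c = 1) (hbd : Nat.gcd b d = 1)
    (hp : 0 < p) [CharP F p] (hpdvd : ¬ p ∣ a * b * c * d)
    (lam : F) (hlam : lam ≠ 0) (v : ℤ × ℤ)
    (hv1 : -(c : ℤ) < v.1) (hv1' : v.1 ≤ (a : ℤ))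
    (hv2 : -(d : ℤ) < v.2) (hv2' : v.2 ≤ (b : ℤ)) :
    ∃ g ∈ Submodule.span F
        {x : LaurentR F | ∃ w : ℤ × ℤ, memB a b c d w ∧ x = AddMonoidAlgebra.single w (1 : F)},
      ∃ h₁ h₂ : LaurentR F,
        AddMonoidAlgebra.single v (1 : F) = g + D1 a c d lam h₁ + D2 b c d lam h₂ := by
  classical
  open Stmt3Aux in
  -- nonvanishing of the relevant scalars
  have haF : (a : F) ≠ 0 := fun h => hpdvd (((CharP.cast_eq_zero_iff F p a).mp h).trans
    ⟨b * c * d, by ring⟩)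
  have hbF : (b : F) ≠ 0 := fun h => hpdvd (((CharP.cast_eq_zero_iff F p b).mp h).trans
    ⟨a * c * d, by ring⟩)
  have hcF : (c : F) ≠ 0 := fun h => hpdvd (((CharP.cast_eq_zero_iff F p c).mp h).trans
    ⟨a * b * d, by ring⟩)
  have hdF : (d : F) ≠ 0 := fun h => hpdvd (((CharP.cast_eq_zero_iff F p d).mp h).trans
    ⟨a * b * c, by ring⟩)
  have hcb : (c : F) * b ≠ 0 := mul_ne_zero hcF hbF
  have hda : (d : F) * a ≠ 0 := mul_ne_zero hdF haF
  suffices h : AddMonoidAlgebra.single v (1 : F) ∈ Stmt3Aux.Mm a b c d lam by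
    obtain ⟨y, hy, z, hz, hsum⟩ := Submodule.mem_sup.mp h
    obtain ⟨g, hg, w, hw, hyw⟩ := Submodule.mem_sup.mp hy
    obtain ⟨h₁, rfl⟩ := hw
    obtain ⟨h₂, rfl⟩ := hz
    exact ⟨g, hg, h₁, h₂, by rw [← hsum, ← hyw]; rfl⟩
  rcases (show c = 1 ∨ 1 < c by omega) with hc1 | hc1
  · rcases (show d = 1 ∨ 1 < d by omega) with hd1 | hd1
    · -- c = d = 1
      subst hc1; subst hd1
      by_cases hex : v = ((0 : ℤ), (b : ℤ))
      · have hv' : v = ((0 : ℤ), (b : ℤ)) + ((0 : ℤ), (0 : ℤ)) := by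
          rw [hex, Prod.mk_add_mk]; norm_num
        rw [hv']
        apply Stmt3Aux.stepUp hcb
        · apply Stmt3Aux.mem_of_memB
          rw [memB, if_neg (by norm_num), if_neg (by norm_num), if_neg (by norm_num)]
          refine ⟨by norm_num, by positivity, by norm_num, by positivity, ?_⟩
          simp [Prod.ext_iff]
          omega
        · rw [Prod.mk_add_mk]
          apply Stmt3Aux.mem_of_memB
          rw [memB, if_neg (by norm_num), if_neg (by norm_num), if_neg (by norm_num)]
          refine ⟨by positivity, by norm_num, by norm_num, by positivity, ?_⟩
          simp [Prod.ext_iff]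
          omega
      · apply Stmt3Aux.mem_of_memB
        rw [memB, if_neg (by norm_num), if_neg (by norm_num), if_neg (by norm_num)]
        exact ⟨by omega, hv1', by omega, hv2', hex⟩
    · -- c = 1, 1 < d
      subst hc1
      by_cases hex : v.1 = (a : ℤ) ∧ 1 - (d : ℤ) ≤ v.2 ∧ v.2 ≤ 0
      · obtain ⟨he1, he2, he3⟩ := hex
        have hv' : v = ((a : ℤ), (0 : ℤ)) + ((0 : ℤ), v.2) := by
          rw [Prod.mk_add_mk]
          exact Prod.ext (by omega) (by omega)
        rw [hv']
        apply Stmt3Aux.stepDown hda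
        · apply Stmt3Aux.mem_of_memB
          rw [memB, if_neg (by omega), if_pos ⟨rfl, hd1⟩]
          refine ⟨by norm_num, by positivity, by omega, by omega, ?_⟩
          rintro ⟨hh, -, -⟩
          simp at hh
          omega
        · rw [Prod.mk_add_mk]
          apply Stmt3Aux.mem_of_memB
          rw [memB, if_neg (by omega), if_pos ⟨rfl, hd1⟩]
          refine ⟨by norm_num, by positivity, by omega, by omega, ?_⟩
          rintro ⟨hh, -, -⟩
          simp at hh
          omega
      · apply Stmt3Aux.mem_of_memB
        rw [memB, if_neg (by omega), if_pos ⟨rfl, hd1⟩]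
        exact ⟨by omega, hv1', hv2, hv2', hex⟩
  · rcases (show d = 1 ∨ 1 < d by omega) with hd1 | hd1
    · -- 1 < c, d = 1
      subst hd1
      by_cases hex : v.2 = (b : ℤ) ∧ 1 - (c : ℤ) ≤ v.1 ∧ v.1 ≤ 0
      · obtain ⟨he1, he2, he3⟩ := hex
        have hv' : v = ((0 : ℤ), (b : ℤ)) + (v.1, (0 : ℤ)) := by
          rw [Prod.mk_add_mk]
          exact Prod.ext (by omega) (by omega)
        rw [hv']
        apply Stmt3Aux.stepUp hcb
        · apply Stmt3Aux.mem_of_memB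
          rw [memB, if_neg (by omega), if_neg (by omega), if_pos ⟨hc1, rfl⟩]
          refine ⟨by omega, by omega, by norm_num, by positivity, ?_⟩
          rintro ⟨hh, -, -⟩
          simp at hh
          omega
        · rw [Prod.mk_add_mk]
          apply Stmt3Aux.mem_of_memB
          rw [memB, if_neg (by omega), if_neg (by omega), if_pos ⟨hc1, rfl⟩]
          refine ⟨by omega, by omega, by norm_num, by positivity, ?_⟩
          rintro ⟨hh, -, -⟩
          simp at hh
          omega
      · apply Stmt3Aux.mem_of_memB
        rw [memB, if_neg (by omega), if_neg (by omega), if_pos ⟨hc1, rfl⟩]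
        exact ⟨hv1, hv1', by omega, hv2', hex⟩
    · -- 1 < c, 1 < d : the strip reduction
      by_cases hlow : -(((d : ℤ) - 1) * a) ≤ ((c : ℤ) - 1) * v.2 - ((d : ℤ) - 1) * v.1
      · apply Stmt3Aux.lemA hc1 hd1 ha hb hcb hda
          ((((c : ℤ) - 1) * v.2 - ((d : ℤ) - 1) * v.1 - ((c : ℤ) - 1) * b).toNat + 1)
          v hv1 hv1' hv2 hv2' hlow
        have := Int.self_le_toNat (((c : ℤ) - 1) * v.2 - ((d : ℤ) - 1) * v.1 - ((c : ℤ) - 1) * b)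
        push_cast
        linarith
      · push_neg at hlow
        apply Stmt3Aux.lemB hc1 hd1 ha hb hcb hda
          ((-(((d : ℤ) - 1) * a) - (((c : ℤ) - 1) * v.2 - ((d : ℤ) - 1) * v.1)).toNat)
          v hv1 hv1' hv2 hv2'
        · have hDA : (1 : ℤ) ≤ ((d : ℤ) - 1) * a := by
            have := mul_le_mul (show (1 : ℤ) ≤ (d : ℤ) - 1 by omega)
              (show (1 : ℤ) ≤ (a : ℤ) by omega) (by omega) (by omega)
            linarith
          have hCB : (1 : ℤ) ≤ ((c : ℤ) - 1) * b := by
            have := mul_le_mul (show (1 : ℤ) ≤ (c : ℤ) - 1 by omega)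
              (show (1 : ℤ) ≤ (b : ℤ) by omega) (by omega) (by omega)
            linarith
          linarith
        · have := Int.self_le_toNat
            (-(((d : ℤ) - 1) * a) - (((c : ℤ) - 1) * v.2 - ((d : ℤ) - 1) * v.1))
          push_cast
          linarith
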